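/- Let V' be a 2×2 integer matrix with det(V') = ±1 and det(V' − I) = ±1. Write V' = [[a,b],[c,d]]. If in addition |a| ≤ |b|/2, |a| ≤ |c|/2, and |a| ≤ |d|, then a = 0. -/

import Mathlib

open Matrix

theorem stmt7 (V : Matrix (Fin 2) (Fin 2) ℤ)
    (h1 : V.det = 1 ∨ V.det = -1)
    (h2 : (V - 1).det = 1 ∨ (V - 1).det = -1)
    (hb : 2 * |V 0 0| ≤ |V 0 1|)
    (hc : 2 * |V 0 0| ≤ |V 1 0|)
    (hd : |V 0 0| ≤ |V 1 1|) :
    V 0 0 = 0 := by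
  set a := V 0 0 with ha
  set b := V 0 1 with hbdef
  set c := V 1 0 with hcdef
  set d := V 1 1 with hddef
  rw [Matrix.det_fin_two] at h1 h2
  simp only [Matrix.sub_apply, Matrix.one_apply] at h2
  norm_num at h2
  rw [← ha, ← hbdef, ← hcdef, ← hddef] at h1 h2
  clear_value a b c d
  clear ha hbdef hcdef hddef
  obtain ⟨s, hs1, h1⟩ : ∃ s : ℤ, (s = 1 ∨ s = -1) ∧ a * d - b * c = s := by
    rcases h1 with h | h
    exacts [⟨1, Or.inl rfl, h⟩, ⟨-1, Or.inr rfl, h⟩]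
  obtain ⟨t, ht1, h2⟩ : ∃ t : ℤ, (t = 1 ∨ t = -1) ∧ (a - 1) * (d - 1) - b * c = t := by
    rcases h2 with h | h
    exacts [⟨1, Or.inl rfl, h⟩, ⟨-1, Or.inr rfl, h⟩]
  have hsum : a + d = s + 1 - t := by linear_combination h1 - h2
  have hbc : b * c = a * d - s := by linarith
  have h4 : 4 * (a * a) ≤ |b * c| := by
    rw [abs_mul]
    nlinarith [mul_le_mul hb hc (by positivity) (abs_nonneg b), abs_mul_abs_self a]
  have habs : |a| ≤ 1 := by
    by_contra h
    push_neg at h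
    have h2a : 2 ≤ |a| := h
    have hdb : |d| ≤ |a| + 3 := by
      rcases abs_cases a with ⟨e, _⟩ | ⟨e, _⟩ <;> rcases abs_cases d with ⟨e', _⟩ | ⟨e', _⟩ <;>
        rcases hs1 with rfl | rfl <;> rcases ht1 with rfl | rfl <;> omega
    have h5 : |b * c| ≤ |a| * |d| + 1 := by
      rw [hbc]
      have t1 : |a * d - s| ≤ |a * d| + |s| := abs_sub _ _
      have t2 : |a * d| = |a| * |d| := abs_mul a d
      have t3 : |s| = 1 := by rcases hs1 with rfl | rfl <;> norm_num
      linarith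
    nlinarith [abs_mul_abs_self a, abs_nonneg a]
  obtain ⟨hal, har⟩ := abs_le.mp habs
  interval_cases a
  · -- a = -1
    exfalso
    norm_num at hd hb hc h4 hbc hsum
    rcases hs1 with rfl | rfl <;> rcases ht1 with rfl | rfl
    · -- d = 2, bc = -3
      have hd2 : d = 2 := by omega
      rw [hd2] at hbc; norm_num at hbc
      rw [← abs_mul, hbc] at h4; norm_num at h4
    · -- d = 4, bc = -5
      have hd2 : d = 4 := by omega
      rw [hd2] at hbc; norm_num at hbc
      have h6 : |b| * |c| = 5 := by rw [← abs_mul, hbc]; norm_num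
      have h7 : |b| ≤ 2 := by nlinarith [abs_nonneg b, abs_nonneg c]
      have h8 : |b| = 2 := le_antisymm h7 hb
      rw [h8] at h6
      obtain ⟨C, hC⟩ : ∃ C, |c| = C := ⟨_, rfl⟩
      rw [hC] at h6 hc
      omega
    · -- d = 0, contradicts |d| ≥ 1
      have hd2 : d = 0 := by omega
      rw [hd2] at hd; norm_num at hd
    · -- d = 2, bc = -1
      have hd2 : d = 2 := by omega
      rw [hd2] at hbc; norm_num at hbc
      rw [← abs_mul, hbc] at h4; norm_num at h4
  · rfl
  · -- a = 1
    exfalso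
    norm_num at hd hb hc h4 hbc hsum
    rcases hs1 with rfl | rfl <;> rcases ht1 with rfl | rfl
    · have hd2 : d = 0 := by omega
      rw [hd2] at hd; norm_num at hd
    · have hd2 : d = 2 := by omega
      rw [hd2] at hbc; norm_num at hbc
      rw [← abs_mul, hbc] at h4; norm_num at h4
    · have hd2 : d = -2 := by omega
      rw [hd2] at hbc; norm_num at hbc
      rw [← abs_mul, hbc] at h4; norm_num at h4
    · have hd2 : d = 0 := by omega
      rw [hd2] at hd; norm_num at hd
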